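/- Let (X,d) be a metric space and let 𝒟 be a set of nonempty compact subsets of X. Then 𝒟 is relatively compact in (K(X), H) (i.e., its closure in (K(X), H) is compact) if and only if the union D = ⋃{C : C ∈ 𝒟} is relatively compact in X (i.e., the closure of D in X is compact). -/

import Mathlib

open Set Filter Metric Topology MeasureTheory

/-- The α-cut of a fuzzy set `u : X → ℝ`: for `α ≠ 0` it is `{x | u x ≥ α}`,
and for `α = 0` it is the closure of `{x | u x > 0}`. -/
noncomputable def cut {X : Type*} [MetricSpace X] (u : X → ℝ) (α : ℝ) : Set X :=
  if α = 0 then closure {x | 0 < u x} else {x | α ≤ u x}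

/-- `u` is a normal upper semicontinuous fuzzy set: it takes values in `[0,1]` and
all α-cuts (`α ∈ [0,1]`) are nonempty and closed. -/
def FUSC {X : Type*} [MetricSpace X] (u : X → ℝ) : Prop :=
  (∀ x, u x ∈ Set.Icc (0:ℝ) 1) ∧
    ∀ α ∈ Set.Icc (0:ℝ) 1, (cut u α).Nonempty ∧ IsClosed (cut u α)

/-- `F_USCG(X)`: fuzzy sets in `F_USC(X)` with compact positive α-cuts. -/
def FUSCG {X : Type*} [MetricSpace X] (u : X → ℝ) : Prop :=
  FUSC u ∧ ∀ α ∈ Set.Ioc (0:ℝ) 1, IsCompact (cut u α)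

/-- `F_USCB(X)`: fuzzy sets in `F_USC(X)` with compact support. -/
def FUSCB {X : Type*} [MetricSpace X] (u : X → ℝ) : Prop :=
  FUSC u ∧ IsCompact (cut u 0)

/-- Kuratowski lower limit of a sequence of sets. -/
def kurLiminf {Y : Type*} [MetricSpace Y] (C : ℕ → Set Y) : Set Y :=
  {y | ∃ f : ℕ → Y, (∀ n, f n ∈ C n) ∧ Tendsto f atTop (𝓝 y)}

/-- Kuratowski upper limit of a sequence of sets. -/
def kurLimsup {Y : Type*} [MetricSpace Y] (C : ℕ → Set Y) : Set Y :=
  {y | ∃ φ : ℕ → ℕ, StrictMono φ ∧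
        ∃ f : ℕ → Y, (∀ n, f n ∈ C (φ n)) ∧ Tendsto f atTop (𝓝 y)}

/-- Kuratowski convergence of a sequence of sets to a set. -/
def KurConv {Y : Type*} [MetricSpace Y] (C : ℕ → Set Y) (D : Set Y) : Prop :=
  kurLiminf C = D ∧ kurLimsup C = D

/-- The endograph of `u`: `{(x,t) ∈ X × [0,1] : u x ≥ t}`. -/
def endo {X : Type*} [MetricSpace X] (u : X → ℝ) : Set (X × ℝ) :=
  {p | p.2 ∈ Set.Icc (0:ℝ) 1 ∧ p.2 ≤ u p.1}

/-- The sendograph of `u`: `end u ∩ ([u]₀ × [0,1])`. -/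
noncomputable def sendo {X : Type*} [MetricSpace X] (u : X → ℝ) : Set (X × ℝ) :=
  endo u ∩ (cut u 0) ×ˢ (Set.Icc (0:ℝ) 1)

/-- Γ-convergence: Kuratowski convergence of endographs. -/
def GammaConv {X : Type*} [MetricSpace X] (un : ℕ → X → ℝ) (u : X → ℝ) : Prop :=
  KurConv (fun n => endo (un n)) (endo u)

/-- The endograph metric. -/
noncomputable def Hend {X : Type*} [MetricSpace X] (u v : X → ℝ) : ℝ :=
  hausdorffDist (endo u) (endo v)

/-- The sendograph metric. -/
noncomputable def Hsend {X : Type*} [MetricSpace X] (u v : X → ℝ) : ℝ :=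
  hausdorffDist (sendo u) (sendo v)

/-- The set of platform points of `u`:
`α ∈ (0,1)` with `closure {u > α}` a proper subset of `[u]_α`. -/
def Pset {X : Type*} [MetricSpace X] (u : X → ℝ) : Set ℝ :=
  {α | α ∈ Set.Ioo (0:ℝ) 1 ∧ closure {x | α < u x} ⊂ cut u α}

/-- `P₀(u)`: the set of `α ∈ (0,1)` such that `H([u]_β, [u]_α)` does not tend to `0`
as `β → α`. -/
def P0set {X : Type*} [MetricSpace X] (u : X → ℝ) : Set ℝ :=
  {α | α ∈ Set.Ioo (0:ℝ) 1 ∧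
    ¬ Tendsto (fun β => hausdorffDist (cut u β) (cut u α)) (𝓝[≠] α) (𝓝 0)}


/-- union over a compact family of nonempty compacts is compact -/
lemma isCompact_biUnion_of_isCompact {X : Type*} [MetricSpace X]
    (𝒦 : Set (TopologicalSpace.NonemptyCompacts X)) (h : IsCompact 𝒦) :
    IsCompact (⋃ C ∈ 𝒦, (C : Set X)) := by
  rcases 𝒦.eq_empty_or_nonempty with rfl | hne
  · simp
  apply IsSeqCompact.isCompact
  intro x hx
  choose C hC hxC using fun n => mem_iUnion₂.1 (hx n)
  obtain ⟨L, hL, φ, hφ, hconv⟩ := h.isSeqCompact hC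
  -- distance from x (φ n) to L tends to 0
  have hdist : Tendsto (fun n => dist (C (φ n)) L) atTop (𝓝 0) :=
    (tendsto_iff_dist_tendsto_zero.1 hconv)
  -- pick nearest points in L
  have hLc : IsCompact (L : Set X) := L.isCompact
  have hLne : (L : Set X).Nonempty := L.nonempty
  choose y hy hyd using fun n => hLc.exists_infDist_eq_dist hLne (x (φ n))
  obtain ⟨z, hz, ψ, hψ, hzconv⟩ := hLc.isSeqCompact hy
  refine ⟨z, mem_iUnion₂.2 ⟨L, hL, hz⟩, φ ∘ ψ, hφ.comp hψ, ?_⟩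
  have key : ∀ n, dist (x (φ n)) (y n) ≤ dist (C (φ n)) L := by
    intro n
    rw [← hyd n]
    have fin : EMetric.hausdorffEdist ((C (φ n)) : Set X) (L : Set X) ≠ ⊤ :=
      hausdorffEdist_ne_top_of_nonempty_of_bounded (C (φ n)).nonempty hLne
        (C (φ n)).isCompact.isBounded hLc.isBounded
    calc infDist (x (φ n)) (L : Set X)
        ≤ hausdorffDist ((C (φ n)) : Set X) (L : Set X) :=
          infDist_le_hausdorffDist_of_mem (hxC (φ n)) fin
      _ = dist (C (φ n)) L := Metric.NonemptyCompacts.dist_eq.symm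
  rw [tendsto_iff_dist_tendsto_zero]
  have h1 : Tendsto (fun n => dist (x (φ (ψ n))) (y (ψ n)) + dist (y (ψ n)) z) atTop (𝓝 0) := by
    have a1 : Tendsto (fun n => dist (x (φ (ψ n))) (y (ψ n))) atTop (𝓝 0) := by
      apply squeeze_zero (fun n => dist_nonneg) (fun n => key (ψ n))
      exact hdist.comp hψ.tendsto_atTop
    have a2 : Tendsto (fun n => dist (y (ψ n)) z) atTop (𝓝 0) :=
      tendsto_iff_dist_tendsto_zero.1 hzconv
    simpa using a1.add a2
  exact squeeze_zero (fun n => dist_nonneg) (fun n => dist_triangle _ _ _) h1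

lemma isCompact_setOf_subset {X : Type*} [MetricSpace X] {K : Set X} (hK : IsCompact K)
    (hKne : K.Nonempty) :
    IsCompact {C : TopologicalSpace.NonemptyCompacts X | (C : Set X) ⊆ K} := by
  haveI : CompactSpace ↥K := isCompact_iff_compactSpace.1 hK
  haveI : Nonempty ↥K := hKne.to_subtype
  -- the map sending a nonempty compact of K to its image in X
  let g : TopologicalSpace.NonemptyCompacts ↥K → TopologicalSpace.NonemptyCompacts X :=
    fun S => ⟨⟨Subtype.val '' (S : Set ↥K),
      S.isCompact.image continuous_subtype_val⟩, S.nonempty.image _⟩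
  have hg : Isometry g := by
    intro S T
    have : edist (g S) (g T) = EMetric.hausdorffEdist
        (Subtype.val '' (S : Set ↥K)) (Subtype.val '' (T : Set ↥K)) := rfl
    rw [this, EMetric.hausdorffEdist, hausdorffEDist_image isometry_subtype_coe]
    rfl
  have hrange : {C : TopologicalSpace.NonemptyCompacts X | (C : Set X) ⊆ K} = Set.range g := by
    ext C
    constructor
    · intro hC
      have hpre : IsCompact (Subtype.val ⁻¹' (C : Set X) : Set ↥K) := by
        rw [Topology.IsEmbedding.isCompact_iff Topology.IsEmbedding.subtypeVal]
        have : Subtype.val '' (Subtype.val ⁻¹' (C : Set X) : Set ↥K) = (C : Set X) := by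
          rw [Subtype.image_preimage_coe]
          exact inter_eq_right.2 hC
        rw [this]; exact C.isCompact
      have hprene : (Subtype.val ⁻¹' (C : Set X) : Set ↥K).Nonempty := by
        obtain ⟨x, hx⟩ := C.nonempty
        exact ⟨⟨x, hC hx⟩, hx⟩
      refine ⟨⟨⟨_, hpre⟩, hprene⟩, ?_⟩
      apply TopologicalSpace.NonemptyCompacts.ext
      show Subtype.val '' (Subtype.val ⁻¹' (C : Set X)) = (C : Set X)
      rw [Subtype.image_preimage_coe]
      exact inter_eq_right.2 hC
    · rintro ⟨S, rfl⟩
      show Subtype.val '' (S : Set ↥K) ⊆ K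
      rintro _ ⟨⟨x, hx⟩, _, rfl⟩
      exact hx
  rw [hrange]
  exact isCompact_range hg.continuous


theorem relatively_compact_iff_union_relatively_compact
    {X : Type*} [MetricSpace X] (𝒟 : Set (TopologicalSpace.NonemptyCompacts X)) :
    IsCompact (closure 𝒟) ↔ IsCompact (closure (⋃ C ∈ 𝒟, (C : Set X))) := by
  
  rcases 𝒟.eq_empty_or_nonempty with rfl | ⟨C₀, hC₀⟩
  · simp
  constructor
  · intro h
    have hU : IsCompact (⋃ C ∈ closure 𝒟, (C : Set X)) :=
      isCompact_biUnion_of_isCompact _ h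
    refine hU.of_isClosed_subset isClosed_closure (closure_minimal ?_ hU.isClosed)
    exact iUnion₂_mono' fun C hC => ⟨C, subset_closure hC, subset_rfl⟩
  · intro h
    set K := closure (⋃ C ∈ 𝒟, (C : Set X)) with hKdef
    have hKne : K.Nonempty := ⟨C₀.nonempty.choose,
      subset_closure (mem_iUnion₂.2 ⟨C₀, hC₀, C₀.nonempty.choose_spec⟩)⟩
    have hcpt := isCompact_setOf_subset h hKne
    refine hcpt.of_isClosed_subset isClosed_closure (closure_minimal ?_ hcpt.isClosed)
    intro C hC
    have : (C : Set X) ⊆ ⋃ C ∈ 𝒟, (C : Set X) := subset_iUnion₂ (s := fun (C : TopologicalSpace.NonemptyCompacts X) (_ : C ∈ 𝒟) => (C : Set X)) C hC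
    exact this.trans subset_closure
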